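/- For any p > 2 and any τ ≥ 1 − 1/p, there exists a t ∈ (0, 1/2] such that Θ_p(τ; t) > Θ_p(τ; 0). -/

import Mathlib

open Real BigOperators

/-- `Θ_p(τ; s) = ∑_{z ∈ ℤ} exp(-τ |z - s|^p)`. -/
noncomputable def Theta1 (p τ s : ℝ) : ℝ :=
  ∑' z : ℤ, Real.exp (-τ * |(z : ℝ) - s| ^ p)

namespace ThetaAux

noncomputable def gg (p τ x : ℝ) : ℝ := Real.exp (-τ * x ^ p)
noncomputable def gg1 (p τ x : ℝ) : ℝ := -(τ * p) * x ^ (p - 1) * Real.exp (-τ * x ^ p)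
noncomputable def gg2 (p τ x : ℝ) : ℝ :=
  τ * p * Real.exp (-τ * x ^ p) * (τ * p * (x ^ (p - 1) * x ^ (p - 1)) - (p - 1) * x ^ (p - 2))

variable {p τ : ℝ}

lemma hasDerivAt_gg (hp : 2 < p) (x : ℝ) : HasDerivAt (gg p τ) (gg1 p τ x) x := by
  have h := (Real.hasDerivAt_rpow_const (p := p) (x := x) (Or.inr (by linarith))).const_mul (-τ)
  have h2 : HasDerivAt (fun x : ℝ => Real.exp (-τ * x ^ p))
      (-(τ * p) * x ^ (p - 1) * Real.exp (-τ * x ^ p)) x := by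
    convert h.exp using 1
    ring
  exact h2

lemma hasDerivAt_gg1 (hp : 2 < p) (x : ℝ) : HasDerivAt (gg1 p τ) (gg2 p τ x) x := by
  have h1 : HasDerivAt (fun x : ℝ => x ^ (p - 1)) ((p - 1) * x ^ (p - 1 - 1)) x :=
    Real.hasDerivAt_rpow_const (Or.inr (by linarith))
  have h2 : HasDerivAt (fun x : ℝ => Real.exp (-τ * x ^ p))
      (-(τ * p) * x ^ (p - 1) * Real.exp (-τ * x ^ p)) x := hasDerivAt_gg hp x
  have h3 : HasDerivAt (fun x : ℝ => -(τ * p) * x ^ (p - 1) * Real.exp (-τ * x ^ p))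
      (gg2 p τ x) x := by
    have h4 := (h1.const_mul (-(τ * p))).mul h2
    refine h4.congr_deriv ?_
    have e : p - 1 - 1 = p - 2 := by ring
    unfold gg2
    rw [e]; ring
  exact h3

lemma diff_gg (hp : 2 < p) : Differentiable ℝ (gg p τ) :=
  fun x => (hasDerivAt_gg hp x).differentiableAt

lemma diff_gg1 (hp : 2 < p) : Differentiable ℝ (gg1 p τ) :=
  fun x => (hasDerivAt_gg1 hp x).differentiableAt

lemma taup (hp : 2 < p) (hτ : 1 - 1 / p ≤ τ) : p - 1 ≤ τ * p := by
  have hp0 : (0 : ℝ) < p := by linarith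
  have h := mul_le_mul_of_nonneg_right hτ hp0.le
  rw [sub_mul, one_mul, div_mul_cancel₀ _ hp0.ne'] at h
  linarith

lemma tau_pos (hp : 2 < p) (hτ : 1 - 1 / p ≤ τ) : 0 < τ := by
  have hp0 : (0 : ℝ) < p := by linarith
  have : 1 / p < 1 := by rw [div_lt_one hp0]; linarith
  linarith

lemma gg2_nonneg (hp : 2 < p) (hτ : 1 - 1 / p ≤ τ) {x : ℝ} (hx : 1 ≤ x) :
    0 ≤ gg2 p τ x := by
  have hx0 : (0 : ℝ) < x := by linarith
  have hτ0 := tau_pos hp hτ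
  have htp := taup hp hτ
  have e : x ^ (p - 1) * x ^ (p - 1) = x ^ (2 * p - 2) := by
    rw [← Real.rpow_add hx0]; ring_nf
  have h1 : x ^ (p - 2) ≤ x ^ (2 * p - 2) :=
    Real.rpow_le_rpow_of_exponent_le hx (by linarith)
  have h2 : (0 : ℝ) ≤ x ^ (2 * p - 2) := Real.rpow_nonneg hx0.le _
  have key : (p - 1) * x ^ (p - 2) ≤ τ * p * (x ^ (p - 1) * x ^ (p - 1)) := by
    rw [e]
    calc (p - 1) * x ^ (p - 2) ≤ (p - 1) * x ^ (2 * p - 2) := by nlinarith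
      _ ≤ τ * p * x ^ (2 * p - 2) := by nlinarith
  have hA : (0 : ℝ) ≤ τ * p := by positivity
  exact mul_nonneg (mul_nonneg hA (Real.exp_pos _).le) (by linarith)

lemma gg2_two_pos (hp : 2 < p) (hτ : 1 - 1 / p ≤ τ) : 0 < gg2 p τ 2 := by
  have hτ0 := tau_pos hp hτ
  have htp := taup hp hτ
  have e : (2 : ℝ) ^ (p - 1) * 2 ^ (p - 1) = 2 ^ p * 2 ^ (p - 2) := by
    rw [← Real.rpow_add two_pos, ← Real.rpow_add two_pos]; ring_nf
  have h1 : (1 : ℝ) < 2 ^ p := by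
    rw [Real.one_lt_rpow_iff_of_pos two_pos]
    exact Or.inl ⟨one_lt_two, by linarith⟩
  have h2 : (0 : ℝ) < 2 ^ (p - 2) := Real.rpow_pos_of_pos two_pos _
  have key : (p - 1) * 2 ^ (p - 2) < τ * p * ((2 : ℝ) ^ (p - 1) * 2 ^ (p - 1)) := by
    rw [e]
    have hstep : (2:ℝ) ^ (p - 2) < 2 ^ p * 2 ^ (p - 2) := by nlinarith
    calc (p - 1) * 2 ^ (p - 2) < (p - 1) * (2 ^ p * 2 ^ (p - 2)) := by
          apply mul_lt_mul_of_pos_left hstep; linarith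
      _ ≤ τ * p * (2 ^ p * 2 ^ (p - 2)) := by nlinarith
  exact mul_pos (mul_pos (by positivity) (Real.exp_pos _)) (by linarith)

lemma mono_gg1 (hp : 2 < p) (hτ : 1 - 1 / p ≤ τ) : MonotoneOn (gg1 p τ) (Set.Ici 1) := by
  apply monotoneOn_of_deriv_nonneg (convex_Ici 1)
    (diff_gg1 hp).continuous.continuousOn (diff_gg1 hp).differentiableOn
  intro x hx
  rw [interior_Ici] at hx
  rw [(hasDerivAt_gg1 hp x).deriv]
  exact gg2_nonneg hp hτ (le_of_lt hx)

lemma bracket (hp : 2 < p) (hτ : 1 - 1 / p ≤ τ) {t x : ℝ} (ht : 0 < t) (ht2 : t ≤ 1 / 2)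
    (hx : 3 ≤ x) : 2 * gg p τ x ≤ gg p τ (x - t) + gg p τ (x + t) := by
  obtain ⟨c₁, hc₁, e₁⟩ := exists_hasDerivAt_eq_slope (gg p τ) (gg1 p τ)
    (show x - t < x by linarith) (diff_gg hp).continuous.continuousOn
    (fun y _ => hasDerivAt_gg hp y)
  obtain ⟨c₂, hc₂, e₂⟩ := exists_hasDerivAt_eq_slope (gg p τ) (gg1 p τ)
    (show x < x + t by linarith) (diff_gg hp).continuous.continuousOn
    (fun y _ => hasDerivAt_gg hp y)
  have hc12 : gg1 p τ c₁ ≤ gg1 p τ c₂ := by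
    apply mono_gg1 hp hτ
    · simp only [Set.mem_Ici]; have := hc₁.1; linarith
    · simp only [Set.mem_Ici]; have := hc₂.1; linarith
    · have := hc₁.2; have := hc₂.1; linarith
  rw [e₁, e₂] at hc12
  have d1 : x - (x - t) = t := by ring
  have d2 : x + t - x = t := by ring
  rw [d1, d2, div_le_div_iff₀ ht ht] at hc12
  nlinarith

lemma exp_term_le (hp : 2 < p) (hτ0 : 0 < τ) (u : ℝ) (n : ℕ) (hu : (n : ℝ) - 1 ≤ |u|) :
    Real.exp (-τ * |u| ^ p) ≤ Real.exp (2 * τ) * Real.exp ((n : ℝ) * (-τ)) := by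
  rw [← Real.exp_add, Real.exp_le_exp]
  have habs : (0 : ℝ) ≤ |u| ^ p := Real.rpow_nonneg (abs_nonneg u) _
  rcases le_or_gt ((n : ℝ)) 1 with h | h
  · nlinarith
  · have hn2 : (2 : ℝ) ≤ (n : ℝ) := by
      have h1 : 1 < n := by exact_mod_cast h
      exact_mod_cast h1
    have h1 : (1 : ℝ) ≤ |u| := by linarith
    have h2 : |u| ≤ |u| ^ p := by
      calc |u| = |u| ^ (1 : ℝ) := (Real.rpow_one _).symm
        _ ≤ |u| ^ p := Real.rpow_le_rpow_of_exponent_le h1 (by linarith)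
    nlinarith

lemma summable_aux (hτ0 : 0 < τ) {f : ℕ → ℝ} (hnn : ∀ n, 0 ≤ f n)
    (hle : ∀ n, f n ≤ Real.exp (2 * τ) * Real.exp ((n : ℝ) * (-τ))) : Summable f :=
  Summable.of_nonneg_of_le hnn hle
    ((Real.summable_exp_nat_mul_iff.mpr (by linarith)).mul_left _)

lemma summable_T (hp : 2 < p) (hτ0 : 0 < τ) {s : ℝ} (hs0 : 0 ≤ s) (hs1 : s ≤ 1) :
    Summable (fun z : ℤ => Real.exp (-τ * |(z : ℝ) - s| ^ p)) := by
  apply Summable.of_nat_of_neg_add_one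
  · apply summable_aux hτ0 (fun n => (Real.exp_pos _).le)
    intro n
    apply exp_term_le hp hτ0
    have h := le_abs_self (((n : ℤ) : ℝ) - s)
    push_cast at h ⊢
    linarith
  · apply summable_aux hτ0 (fun n => (Real.exp_pos _).le)
    intro n
    apply exp_term_le hp hτ0
    have h := neg_le_abs (((-((n : ℤ) + 1)) : ℝ) - s)
    push_cast at h ⊢
    linarith

end ThetaAux

open ThetaAux

/-- For any `p > 2` and any `τ ≥ 1 − 1/p`, there exists `t ∈ (0, 1/2]` with
`Θ_p(τ; t) > Θ_p(τ; 0)`. -/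
theorem exists_shift_theta_gt (p τ : ℝ) (hp : 2 < p) (hτ : 1 - 1 / p ≤ τ) :
    ∃ t ∈ Set.Ioc (0 : ℝ) (1 / 2), Theta1 p τ 0 < Theta1 p τ t := by
  have hp0 : (0 : ℝ) < p := by linarith
  have hτ0 : 0 < τ := tau_pos hp hτ
  set F : ℝ → ℝ := fun t => (gg p τ t - 1) + (gg p τ (1 - t) + gg p τ (1 + t) - 2 * gg p τ 1)
    + (gg p τ (2 - t) + gg p τ (2 + t) - 2 * gg p τ 2) with hF
  set G : ℝ → ℝ := fun t => gg1 p τ t + (gg1 p τ (1 + t) - gg1 p τ (1 - t))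
    + (gg1 p τ (2 + t) - gg1 p τ (2 - t)) with hG
  have hFderiv : ∀ t : ℝ, HasDerivAt F (G t) t := by
    intro t
    have h0 := hasDerivAt_gg (τ := τ) hp t
    have hin1 : HasDerivAt (fun y : ℝ => 1 - y) (-1) t := (hasDerivAt_id t).const_sub 1
    have hin2 : HasDerivAt (fun y : ℝ => 1 + y) 1 t := (hasDerivAt_id t).const_add 1
    have hin3 : HasDerivAt (fun y : ℝ => 2 - y) (-1) t := (hasDerivAt_id t).const_sub 2
    have hin4 : HasDerivAt (fun y : ℝ => 2 + y) 1 t := (hasDerivAt_id t).const_add 2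
    have ha : HasDerivAt (fun y : ℝ => gg p τ (1 - y)) (gg1 p τ (1 - t) * (-1)) t :=
      (hasDerivAt_gg hp (1 - t)).comp t hin1
    have hb : HasDerivAt (fun y : ℝ => gg p τ (1 + y)) (gg1 p τ (1 + t) * 1) t :=
      (hasDerivAt_gg hp (1 + t)).comp t hin2
    have hc : HasDerivAt (fun y : ℝ => gg p τ (2 - y)) (gg1 p τ (2 - t) * (-1)) t :=
      (hasDerivAt_gg hp (2 - t)).comp t hin3
    have hd : HasDerivAt (fun y : ℝ => gg p τ (2 + y)) (gg1 p τ (2 + t) * 1) t :=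
      (hasDerivAt_gg hp (2 + t)).comp t hin4
    have hcomb := ((h0.sub_const 1).add ((ha.add hb).sub_const (2 * gg p τ 1))).add
      ((hc.add hd).sub_const (2 * gg p τ 2))
    refine hcomb.congr_deriv ?_
    simp only [hG]; ring
  set L : ℝ := gg2 p τ 0 + 2 * gg2 p τ 1 + 2 * gg2 p τ 2 with hLdef
  have hGderiv : HasDerivAt G L 0 := by
    have h0 := hasDerivAt_gg1 (τ := τ) hp 0
    have hin1 : HasDerivAt (fun y : ℝ => 1 - y) (-1) (0 : ℝ) := (hasDerivAt_id _).const_sub 1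
    have hin2 : HasDerivAt (fun y : ℝ => 1 + y) 1 (0 : ℝ) := (hasDerivAt_id _).const_add 1
    have hin3 : HasDerivAt (fun y : ℝ => 2 - y) (-1) (0 : ℝ) := (hasDerivAt_id _).const_sub 2
    have hin4 : HasDerivAt (fun y : ℝ => 2 + y) 1 (0 : ℝ) := (hasDerivAt_id _).const_add 2
    have ha : HasDerivAt (fun y : ℝ => gg1 p τ (1 - y)) (gg2 p τ (1 - 0) * (-1)) 0 :=
      (hasDerivAt_gg1 hp (1 - 0)).comp 0 hin1
    have hb : HasDerivAt (fun y : ℝ => gg1 p τ (1 + y)) (gg2 p τ (1 + 0) * 1) 0 :=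
      (hasDerivAt_gg1 hp (1 + 0)).comp 0 hin2
    have hc : HasDerivAt (fun y : ℝ => gg1 p τ (2 - y)) (gg2 p τ (2 - 0) * (-1)) 0 :=
      (hasDerivAt_gg1 hp (2 - 0)).comp 0 hin3
    have hd : HasDerivAt (fun y : ℝ => gg1 p τ (2 + y)) (gg2 p τ (2 + 0) * 1) 0 :=
      (hasDerivAt_gg1 hp (2 + 0)).comp 0 hin4
    have hcomb := (h0.add (hb.sub ha)).add (hd.sub hc)
    refine hcomb.congr_deriv ?_
    rw [hLdef]
    norm_num
    try ring
  have hzero : ∀ q : ℝ, 0 < q → (0 : ℝ) ^ q = 0 := fun q hq => Real.zero_rpow hq.ne'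
  have hG0 : G 0 = 0 := by
    simp only [hG, gg1]
    rw [hzero (p - 1) (by linarith)]
    ring
  have hLpos : 0 < L := by
    have h20 : gg2 p τ 0 = 0 := by
      unfold gg2
      rw [hzero (p - 1) (by linarith), hzero (p - 2) (by linarith)]
      ring
    have h21 := gg2_nonneg hp hτ (le_refl 1)
    have h22 := gg2_two_pos hp hτ
    rw [hLdef, h20]; linarith
  have hslope : Filter.Tendsto (fun t => G t / t) (nhdsWithin 0 (Set.Ioi 0)) (nhds L) := by
    have h1 := hasDerivAt_iff_tendsto_slope.mp hGderiv
    have h2 : Filter.Tendsto (slope G 0) (nhdsWithin 0 (Set.Ioi 0)) (nhds L) :=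
      h1.mono_left (nhdsWithin_mono 0 (fun x hx => ne_of_gt hx))
    refine h2.congr' ?_
    filter_upwards [self_mem_nhdsWithin] with x hx
    have hx0 : (0 : ℝ) < x := hx
    rw [slope_def_field, hG0]
    rw [div_eq_div_iff (sub_ne_zero.mpr (ne_of_gt hx0)) (ne_of_gt hx0)]
    ring
  have hev : ∀ᶠ t in nhdsWithin 0 (Set.Ioi 0), 0 < G t := by
    have h3 := hslope.eventually (eventually_gt_nhds hLpos)
    filter_upwards [h3, self_mem_nhdsWithin] with x h hx
    have hx0 : (0 : ℝ) < x := hx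
    have h4 := mul_pos h hx0
    rwa [div_mul_cancel₀ _ (ne_of_gt hx0)] at h4
  rw [eventually_nhdsWithin_iff, Metric.eventually_nhds_iff] at hev
  obtain ⟨ε, hε, hball⟩ := hev
  set t : ℝ := min (ε / 2) (1 / 2) with htdef
  have ht0 : 0 < t := lt_min (by linarith) (by norm_num)
  have ht12 : t ≤ 1 / 2 := min_le_right _ _
  have hGpos : ∀ c : ℝ, 0 < c → c ≤ t → 0 < G c := by
    intro c hc hct
    apply hball
    · rw [Real.dist_eq, sub_zero, abs_of_pos hc]
      have h5 : t ≤ ε / 2 := min_le_left _ _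
      linarith
    · exact hc
  have hF0 : F 0 = 0 := by
    simp only [hF, gg]
    rw [hzero p hp0]
    norm_num
    try ring
  have hFt : 0 < F t := by
    have hFdiff : Differentiable ℝ F := fun x => (hFderiv x).differentiableAt
    obtain ⟨c, hc, hceq⟩ := exists_hasDerivAt_eq_slope F G ht0
      hFdiff.continuous.continuousOn (fun x _ => hFderiv x)
    rw [hF0, sub_zero, sub_zero, eq_div_iff (ne_of_gt ht0)] at hceq
    have hGc : 0 < G c := hGpos c hc.1 (le_of_lt hc.2)
    rw [← hceq]
    exact mul_pos hGc ht0
  refine ⟨t, ⟨ht0, ht12⟩, ?_⟩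
  -- series bookkeeping
  set A : ℝ → ℝ := fun s => Real.exp (-τ * |(0 : ℝ) - s| ^ p)
    + Real.exp (-τ * |(1 : ℝ) - s| ^ p) + Real.exp (-τ * |(2 : ℝ) - s| ^ p)
    + Real.exp (-τ * |(-1 : ℝ) - s| ^ p) + Real.exp (-τ * |(-2 : ℝ) - s| ^ p) with hAdef
  set P : ℝ → ℝ := fun s => ∑' n : ℕ, Real.exp (-τ * |((n : ℝ) + 3) - s| ^ p) with hPdef
  set Q : ℝ → ℝ := fun s => ∑' n : ℕ, Real.exp (-τ * |(-((n : ℝ) + 3)) - s| ^ p) with hQdef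
  have hsumP : ∀ s : ℝ, 0 ≤ s → s ≤ 1 →
      Summable (fun n : ℕ => Real.exp (-τ * |((n : ℝ) + 3) - s| ^ p)) := by
    intro s h1 h2
    have hS := summable_T hp hτ0 h1 h2
    have hinj : Function.Injective (fun n : ℕ => ((n : ℤ) + 3)) := fun a b h => by
      simpa using h
    have := hS.comp_injective hinj
    refine this.congr fun n => ?_
    simp only [Function.comp]
    push_cast
    ring_nf
  have hsumQ : ∀ s : ℝ, 0 ≤ s → s ≤ 1 →
      Summable (fun n : ℕ => Real.exp (-τ * |(-((n : ℝ) + 3)) - s| ^ p)) := by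
    intro s h1 h2
    have hS := summable_T hp hτ0 h1 h2
    have hinj : Function.Injective (fun n : ℕ => (-((n : ℤ) + 3))) := fun a b h => by
      simpa using h
    have := hS.comp_injective hinj
    refine this.congr fun n => ?_
    simp only [Function.comp]
    push_cast
    ring_nf
  have hsplit : ∀ s : ℝ, 0 ≤ s → s ≤ 1 → Theta1 p τ s = A s + (P s + Q s) := by
    intro s h1 h2
    have hS := summable_T hp hτ0 h1 h2
    rw [Theta1]
    set fz : ℤ → ℝ := fun z => Real.exp (-τ * |(z : ℝ) - s| ^ p) with hfz
    have hnat : Summable (fun n : ℕ => fz n) :=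
      hS.comp_injective (fun a b h => by exact_mod_cast h)
    have hneg : Summable (fun n : ℕ => fz (-((n : ℤ) + 1))) := by
      have hinj : Function.Injective (fun n : ℕ => (-((n : ℤ) + 1))) := fun a b h => by
        simpa using h
      exact hS.comp_injective hinj
    have e1 : ∑' z : ℤ, fz z = (∑' n : ℕ, fz n) + ∑' n : ℕ, fz (-((n : ℤ) + 1)) :=
      tsum_of_nat_of_neg_add_one hnat hneg
    have e2 := Summable.sum_add_tsum_nat_add (f := fun n : ℕ => fz n) 3 hnat
    have e3 := Summable.sum_add_tsum_nat_add (f := fun n : ℕ => fz (-((n : ℤ) + 1))) 2 hneg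
    have p1 : (∑' i : ℕ, fz ((i + 3 : ℕ))) = P s := by
      refine tsum_congr fun n => ?_
      simp only [hfz, hPdef]
      push_cast
      ring_nf
    have p2 : (∑' i : ℕ, fz (-(((i + 2 : ℕ) : ℤ) + 1))) = Q s := by
      refine tsum_congr fun n => ?_
      simp only [hfz, hQdef]
      push_cast
      ring_nf
    rw [e1, ← e2, ← e3]
    rw [Finset.sum_range_succ, Finset.sum_range_succ, Finset.sum_range_succ,
      Finset.sum_range_zero, Finset.sum_range_succ, Finset.sum_range_succ,
      Finset.sum_range_zero]
    rw [p1, p2]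
    simp only [hfz, hAdef]
    push_cast
    norm_num
    ring
  -- tails comparison
  have hkey : ∀ n : ℕ, Real.exp (-τ * |((n : ℝ) + 3) - 0| ^ p)
      + Real.exp (-τ * |(-((n : ℝ) + 3)) - 0| ^ p)
      ≤ Real.exp (-τ * |((n : ℝ) + 3) - t| ^ p)
      + Real.exp (-τ * |(-((n : ℝ) + 3)) - t| ^ p) := by
    intro n
    have hn : (0 : ℝ) ≤ (n : ℝ) := Nat.cast_nonneg n
    have hx : (3 : ℝ) ≤ (n : ℝ) + 3 := by linarith
    have hb := bracket hp hτ ht0 ht12 hx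
    simp only [gg] at hb
    have a1 : |((n : ℝ) + 3) - 0| = (n : ℝ) + 3 := by
      rw [sub_zero, abs_of_nonneg (by linarith)]
    have a2 : |(-((n : ℝ) + 3)) - 0| = (n : ℝ) + 3 := by
      rw [sub_zero, abs_neg, abs_of_nonneg (by linarith)]
    have a3 : |((n : ℝ) + 3) - t| = ((n : ℝ) + 3) - t := abs_of_nonneg (by linarith)
    have a4 : |(-((n : ℝ) + 3)) - t| = ((n : ℝ) + 3) + t := by
      rw [show (-((n : ℝ) + 3)) - t = -(((n : ℝ) + 3) + t) by ring, abs_neg,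
        abs_of_nonneg (by linarith)]
    rw [a1, a2, a3, a4]
    linarith
  have htails : P 0 + Q 0 ≤ P t + Q t := by
    have hP0 := hsumP 0 le_rfl zero_le_one
    have hQ0 := hsumQ 0 le_rfl zero_le_one
    have hPt := hsumP t ht0.le (by linarith)
    have hQt := hsumQ t ht0.le (by linarith)
    simp only [hPdef, hQdef]
    rw [← Summable.tsum_add hP0 hQ0, ← Summable.tsum_add hPt hQt]
    exact Summable.tsum_le_tsum hkey (hP0.add hQ0) (hPt.add hQt)
  -- heads comparison
  have hheads : A t = A 0 + F t := by
    have a1 : |(0 : ℝ) - t| = t := by rw [zero_sub, abs_neg, abs_of_pos ht0]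
    have a2 : |(1 : ℝ) - t| = 1 - t := abs_of_nonneg (by linarith)
    have a3 : |(2 : ℝ) - t| = 2 - t := abs_of_nonneg (by linarith)
    have a4 : |(-1 : ℝ) - t| = 1 + t := by
      rw [show (-1 : ℝ) - t = -(1 + t) by ring, abs_neg, abs_of_nonneg (by linarith)]
    have a5 : |(-2 : ℝ) - t| = 2 + t := by
      rw [show (-2 : ℝ) - t = -(2 + t) by ring, abs_neg, abs_of_nonneg (by linarith)]
    have b1 : |(0 : ℝ) - 0| = 0 := by norm_num
    have b2 : |(1 : ℝ) - 0| = 1 := by norm_num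
    have b3 : |(2 : ℝ) - 0| = 2 := by norm_num
    have b4 : |(-1 : ℝ) - 0| = 1 := by norm_num
    have b5 : |(-2 : ℝ) - 0| = 2 := by norm_num
    simp only [hAdef, hF, gg]
    rw [a1, a2, a3, a4, a5, b1, b2, b3, b4, b5, hzero p hp0]
    norm_num [Real.exp_zero]
    ring
  have Ht := hsplit t ht0.le (by linarith)
  have H0 := hsplit 0 le_rfl zero_le_one
  rw [Ht, H0, hheads]
  linarith
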